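/- Let α, β, K > 0, f ∈ ℝⁿ, L symmetric with K·I + L positive definite. Suppose v₀* ∈ ℝⁿ satisfies both 2v₀*ᵢ + K > 0 for all i and -L + 2·diag(v₀*) positive definite. Then the function v₁* ↦ J*(v₁*, v₀*) = (1/2)⟨v₁*, (K·I + L)⁻¹v₁*⟩ - (1/2)∑ᵢ(v₁*ᵢ + fᵢ)²/(2v₀*ᵢ + K) - (1/(2α))∑ᵢ(v₀*ᵢ)² - β∑ᵢ v₀*ᵢ is convex on ℝⁿ. -/

import Mathlib

open Matrix

lemma key_ineq (n : ℕ) (K : ℝ) (v₀s : Fin n → ℝ)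
    (L : Matrix (Fin n) (Fin n) ℝ) (hL : L.IsSymm)
    (hpos : (K • (1 : Matrix (Fin n) (Fin n) ℝ) + L).PosDef)
    (hA : ∀ i, 0 < 2 * v₀s i + K)
    (hB : (-L + (2 : ℝ) • diagonal v₀s).PosDef)
    (x : Fin n → ℝ) :
    ∑ i, x i ^ 2 / (2 * v₀s i + K) ≤ x ⬝ᵥ (K • (1 : Matrix (Fin n) (Fin n) ℝ) + L)⁻¹.mulVec x := by
  set M := K • (1 : Matrix (Fin n) (Fin n) ℝ) + L with hM
  have hMsymm : Mᵀ = M := by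
    rw [hM, Matrix.transpose_add, Matrix.transpose_smul, Matrix.transpose_one, hL.eq]
  have hdet : IsUnit M.det := (Matrix.isUnit_iff_isUnit_det M).1 hpos.isUnit
  have hNM : M⁻¹ * M = 1 := Matrix.nonsing_inv_mul M hdet
  have hNsymm : (M⁻¹)ᵀ = M⁻¹ := by
    rw [Matrix.transpose_nonsing_inv, hMsymm]
  set d : Fin n → ℝ := fun i => 2 * v₀s i + K with hd
  set z : Fin n → ℝ := fun i => x i / d i with hz
  have hNpsd : ∀ w : Fin n → ℝ, 0 ≤ w ⬝ᵥ M⁻¹.mulVec w := by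
    intro w
    have := hpos.inv.posSemidef.dotProduct_mulVec_nonneg w
    simpa using this
  have h0 : 0 ≤ (x - M.mulVec z) ⬝ᵥ M⁻¹.mulVec (x - M.mulVec z) := hNpsd _
  have e1 : M⁻¹.mulVec (M.mulVec z) = z := by
    rw [Matrix.mulVec_mulVec, hNM, Matrix.one_mulVec]
  have e2 : (M.mulVec z) ⬝ᵥ M⁻¹.mulVec x = z ⬝ᵥ x := by
    rw [Matrix.dotProduct_mulVec, ← Matrix.mulVec_transpose, hNsymm, e1]
  have hexp : (x - M.mulVec z) ⬝ᵥ M⁻¹.mulVec (x - M.mulVec z)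
      = x ⬝ᵥ M⁻¹.mulVec x - x ⬝ᵥ z - z ⬝ᵥ x + z ⬝ᵥ M.mulVec z := by
    rw [Matrix.mulVec_sub, sub_dotProduct, dotProduct_sub,
      dotProduct_sub, e1, e2]
    rw [dotProduct_comm (M.mulVec z) z]
    ring
  -- D - M = -L + 2 diag v₀s
  have hDM : diagonal d - M = -L + (2 : ℝ) • diagonal v₀s := by
    ext i j
    by_cases h : i = j <;>
      simp [hM, hd, Matrix.diagonal, Matrix.one_apply, h, Matrix.add_apply,
        Matrix.sub_apply, Matrix.smul_apply, Matrix.neg_apply] <;> ring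
  have hBz : 0 ≤ z ⬝ᵥ (diagonal d - M).mulVec z := by
    rw [hDM]
    simpa using hB.posSemidef.dotProduct_mulVec_nonneg z
  have hsplit : z ⬝ᵥ M.mulVec z = z ⬝ᵥ (diagonal d).mulVec z - z ⬝ᵥ (diagonal d - M).mulVec z := by
    rw [Matrix.sub_mulVec, dotProduct_sub]
    ring
  have hS1 : z ⬝ᵥ x = ∑ i, x i ^ 2 / d i := by
    unfold dotProduct
    refine Finset.sum_congr rfl fun i _ => ?_
    rw [hz]
    ring
  have hS2 : x ⬝ᵥ z = ∑ i, x i ^ 2 / d i := by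
    rw [dotProduct_comm, hS1]
  have hS3 : z ⬝ᵥ (diagonal d).mulVec z = ∑ i, x i ^ 2 / d i := by
    unfold dotProduct
    refine Finset.sum_congr rfl fun i _ => ?_
    rw [Matrix.mulVec_diagonal, hz]
    have hdne : d i ≠ 0 := (hA i).ne'
    field_simp
  rw [hexp, hS2, hS1, hsplit, hS3] at h0
  have : ∑ i, x i ^ 2 / d i ≤ x ⬝ᵥ M⁻¹.mulVec x := by linarith
  simpa [hd] using this


/-- If `2v₀*ᵢ + K > 0` for all `i` and `-L + 2·diag(v₀*)` is positive definite,
then `v₁* ↦ J*(v₁*,v₀*)` is convex on `ℝⁿ`. -/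
theorem dual_functional_convex_in_v1 (n : ℕ) (α β K : ℝ)
    (hα : 0 < α) (hβ : 0 < β) (hK : 0 < K)
    (f v₀s : Fin n → ℝ) (L : Matrix (Fin n) (Fin n) ℝ) (hL : L.IsSymm)
    (hpos : (K • (1 : Matrix (Fin n) (Fin n) ℝ) + L).PosDef)
    (hA : ∀ i, 0 < 2 * v₀s i + K)
    (hB : (-L + (2 : ℝ) • diagonal v₀s).PosDef) :
    ConvexOn ℝ Set.univ (fun v₁s : Fin n → ℝ =>
      (1 / 2) * (v₁s ⬝ᵥ (K • (1 : Matrix (Fin n) (Fin n) ℝ) + L)⁻¹.mulVec v₁s)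
      - (1 / 2) * ∑ i, (v₁s i + f i) ^ 2 / (2 * v₀s i + K)
      - (1 / (2 * α)) * ∑ i, (v₀s i) ^ 2 - β * ∑ i, v₀s i) := by
  set M := K • (1 : Matrix (Fin n) (Fin n) ℝ) + L with hM
  have hMsymm : Mᵀ = M := by
    rw [hM, Matrix.transpose_add, Matrix.transpose_smul, Matrix.transpose_one, hL.eq]
  have hNsymm : (M⁻¹)ᵀ = M⁻¹ := by
    rw [Matrix.transpose_nonsing_inv, hMsymm]
  set d : Fin n → ℝ := fun i => 2 * v₀s i + K with hd
  -- symmetry of the bilinear form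
  have hsymmB : ∀ u w : Fin n → ℝ, u ⬝ᵥ M⁻¹.mulVec w = w ⬝ᵥ M⁻¹.mulVec u := by
    intro u w
    rw [Matrix.dotProduct_mulVec, ← Matrix.mulVec_transpose, hNsymm,
      dotProduct_comm]
  refine ⟨convex_univ, ?_⟩
  intro x _ y _ a b ha hb hab
  simp only [smul_eq_mul]
  set P := x ⬝ᵥ M⁻¹.mulVec x with hP
  set Q := y ⬝ᵥ M⁻¹.mulVec y with hQ
  set R := x ⬝ᵥ M⁻¹.mulVec y with hR
  set Sx := ∑ i, (x i + f i) ^ 2 / d i with hSx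
  set Sy := ∑ i, (y i + f i) ^ 2 / d i with hSy
  set T := ∑ i, (x i + f i) * (y i + f i) / d i with hT
  have hb' : b = 1 - a := by linarith
  -- quadratic form expansion
  have hq : (a • x + b • y) ⬝ᵥ M⁻¹.mulVec (a • x + b • y)
      = a ^ 2 * P + 2 * a * b * R + b ^ 2 * Q := by
    rw [Matrix.mulVec_add, Matrix.mulVec_smul, Matrix.mulVec_smul,
      add_dotProduct, smul_dotProduct, smul_dotProduct,
      dotProduct_add, dotProduct_add,
      dotProduct_smul, dotProduct_smul,
      dotProduct_smul, dotProduct_smul,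
      hsymmB y x]
    simp only [smul_eq_mul]
    ring
  -- sum expansion
  have hs : ∑ i, ((a • x + b • y) i + f i) ^ 2 / d i
      = a ^ 2 * Sx + 2 * a * b * T + b ^ 2 * Sy := by
    rw [hSx, hSy, hT, Finset.mul_sum, Finset.mul_sum, Finset.mul_sum,
      ← Finset.sum_add_distrib, ← Finset.sum_add_distrib]
    refine Finset.sum_congr rfl fun i _ => ?_
    have hdne : d i ≠ 0 := (hA i).ne'
    simp only [Pi.add_apply, Pi.smul_apply, smul_eq_mul]
    rw [hb']
    field_simp
    ring
  -- key inequality on x - y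
  have hkey0 := key_ineq n K v₀s L hL hpos hA hB (x - y)
  have hkq : (x - y) ⬝ᵥ M⁻¹.mulVec (x - y) = P - 2 * R + Q := by
    rw [Matrix.mulVec_sub, sub_dotProduct, dotProduct_sub,
      dotProduct_sub, hsymmB y x]
    ring
  have hks : ∑ i, (x i - y i) ^ 2 / d i = Sx - 2 * T + Sy := by
    rw [hSx, hSy, hT, Finset.mul_sum, ← Finset.sum_sub_distrib, ← Finset.sum_add_distrib]
    refine Finset.sum_congr rfl fun i _ => ?_
    have hdne : d i ≠ 0 := (hA i).ne'
    field_simp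
    ring
  have hkey : Sx - 2 * T + Sy ≤ P - 2 * R + Q := by
    rw [← hks, ← hkq]
    simpa [hd] using hkey0
  rw [hq, hs]
  have hab0 : 0 ≤ a * b := mul_nonneg ha hb
  subst hb'
  nlinarith [mul_nonneg hab0 (sub_nonneg.mpr hkey), sq_nonneg a, sq_nonneg (1-a)]
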